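/- arXiv:0908.3266 — 2 statements merged into one kernel-verified Lean document; each statement's English description precedes it below -/
import Mathlib

section
/- Let d ≥ 3 be odd, a_1,…,a_d ∈ F_q nonzero, S = {x ∈ F_q^d : ∑ a_j x_j² = 0}, and (dσ)^∨(m) = |S|^{−1} ∑_{x∈S} χ(x·m). Then (dσ)^∨(0,…,0) = 1, and there is a constant C independent of q such that |(dσ)^∨(m)| ≤ C q^{−(d−1)/2} for all m ≠ (0,…,0). -/
set_option maxHeartbeats 1000000
set_option linter.unusedSectionVars false

open Finset BigOperators
open scoped Classical

noncomputable def etaC (F : Type) [Field F] [Fintype F] : MulChar F ℂ :=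
  (quadraticChar F).ringHomComp (Int.castRingHom ℂ)

section Helpers

variable {F : Type} [Field F] [Fintype F]

lemma addChar_map_sum {ι : Type} (ψ : AddChar F ℂ) (s : Finset ι) (f : ι → F) :
    ψ (∑ i ∈ s, f i) = ∏ i ∈ s, ψ (f i) := by
  induction s using Finset.cons_induction with
  | empty => simp
  | cons i s hi ih => rw [Finset.sum_cons, Finset.prod_cons, AddChar.map_add_eq_mul, ih]

lemma etaC_mul_self {t : F} (ht : t ≠ 0) : etaC F t * etaC F t = 1 := by
  have h := quadraticChar_sq_one ht
  simp only [etaC, MulChar.ringHomComp_apply, ← map_mul, ← sq]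
  rw [← map_pow, h, map_one]

lemma etaC_norm {t : F} (ht : t ≠ 0) : ‖etaC F t‖ = 1 := by
  rcases quadraticChar_dichotomy ht with h | h <;>
    simp [etaC, MulChar.ringHomComp_apply, h]

lemma etaC_zero : etaC F 0 = 0 := by
  simp [etaC, MulChar.ringHomComp_apply]

lemma etaC_ne_one (hF : ringChar F ≠ 2) : etaC F ≠ 1 := by
  obtain ⟨t, ht⟩ := quadraticChar_exists_neg_one hF
  have ht0 : t ≠ 0 := by
    intro h
    rw [h, quadraticChar_zero] at ht
    norm_num at ht
  intro h
  have h1 : etaC F t = 1 := by rw [h]; exact MulChar.one_apply_coe (Units.mk0 t ht0)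
  rw [etaC, MulChar.ringHomComp_apply, ht] at h1
  norm_num at h1

lemma etaC_quadratic : (etaC F).IsQuadratic :=
  (quadraticChar_isQuadratic F).comp _

lemma etaC_inv {t : F} (ht : t ≠ 0) : etaC F t⁻¹ = etaC F t := by
  have h1 : etaC F t⁻¹ * etaC F t = 1 := by
    rw [← map_mul, inv_mul_cancel₀ ht, map_one]
  have h2 := etaC_mul_self ht
  calc etaC F t⁻¹ = etaC F t⁻¹ * (etaC F t * etaC F t) := by rw [h2, mul_one]
    _ = (etaC F t⁻¹ * etaC F t) * etaC F t := by ring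
    _ = etaC F t := by rw [h1, one_mul]

end Helpers

section Sums

variable {F : Type} [Field F] [Fintype F]

lemma sum_sq_char (hF : ringChar F ≠ 2) {χ : AddChar F ℂ} (hχ : χ ≠ 1)
    {b : F} (hb : b ≠ 0) :
    ∑ x : F, χ (b * x ^ 2) = etaC F b * gaussSum (etaC F) χ := by
  have hprim : χ.IsPrimitive := AddChar.IsPrimitive.of_ne_one hχ
  have hcount : ∀ u : F, ((univ.filter (fun x : F => x ^ 2 = u)).card : ℂ)
      = etaC F u + 1 := by
    intro u
    have h := quadraticChar_card_sqrts hF u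
    have he : {x : F | x ^ 2 = u}.toFinset = univ.filter (fun x : F => x ^ 2 = u) := by
      ext x; simp
    rw [he] at h
    have : ((univ.filter (fun x : F => x ^ 2 = u)).card : ℤ) = quadraticChar F u + 1 := h
    calc ((univ.filter (fun x : F => x ^ 2 = u)).card : ℂ)
        = (((univ.filter (fun x : F => x ^ 2 = u)).card : ℤ) : ℂ) := by push_cast; ring
      _ = ((quadraticChar F u + 1 : ℤ) : ℂ) := by rw [this]
      _ = etaC F u + 1 := by
          push_cast [etaC, MulChar.ringHomComp_apply, eq_intCast]
          ring
  calc ∑ x : F, χ (b * x ^ 2)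
      = ∑ u : F, ∑ x ∈ univ.filter (fun x : F => x ^ 2 = u), χ (b * u) := by
        rw [Finset.sum_fiberwise' univ (fun x : F => x ^ 2) (fun u => χ (b * u))]
    _ = ∑ u : F, ((univ.filter (fun x : F => x ^ 2 = u)).card : ℂ) * χ (b * u) := by
        simp [Finset.sum_const, nsmul_eq_mul]
    _ = ∑ u : F, (etaC F u + 1) * χ (b * u) := by
        refine Finset.sum_congr rfl fun u _ => ?_; rw [hcount u]
    _ = (∑ u : F, etaC F u * χ (b * u)) + ∑ u : F, χ (b * u) := by
        rw [← Finset.sum_add_distrib]; refine Finset.sum_congr rfl fun u _ => ?_; ring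
    _ = (∑ u : F, etaC F u * χ (b * u)) + 0 := by
        congr 1
        have := AddChar.sum_mulShift b hprim
        simp only [hb, if_false] at this
        push_cast at this
        rw [← this]
        exact Finset.sum_congr rfl fun u _ => by rw [mul_comm]
    _ = gaussSum (etaC F) (χ.mulShift b) := by
        rw [add_zero, gaussSum]
        exact Finset.sum_congr rfl fun u _ => by rw [AddChar.mulShift_apply]
    _ = etaC F b * gaussSum (etaC F) χ := by
        have h := gaussSum_mulShift (etaC F) χ (Units.mk0 b hb)
        rw [Units.val_mk0] at h
        have h2 := etaC_mul_self hb
        calc gaussSum (etaC F) (χ.mulShift b)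
            = (etaC F b * etaC F b) * gaussSum (etaC F) (χ.mulShift b) := by
              rw [h2, one_mul]
          _ = etaC F b * (etaC F b * gaussSum (etaC F) (χ.mulShift b)) := by ring
          _ = etaC F b * gaussSum (etaC F) χ := by rw [h]

lemma sum_quad_char (hF : ringChar F ≠ 2) {χ : AddChar F ℂ} (hχ : χ ≠ 1)
    {b : F} (hb : b ≠ 0) (m : F) :
    ∑ x : F, χ (b * x ^ 2 + x * m)
      = χ (-(m ^ 2 / (4 * b))) * (etaC F b * gaussSum (etaC F) χ) := by
  have h2 : (2 : F) ≠ 0 := Ring.two_ne_zero hF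
  have h4 : (4 : F) ≠ 0 := by
    have : (4 : F) = 2 * 2 := by norm_num
    rw [this]; exact mul_ne_zero h2 h2
  set s : F := m / (2 * b) with hs
  have key : ∀ y : F, b * (y - s) ^ 2 + (y - s) * m = b * y ^ 2 + (-(m ^ 2 / (4 * b))) := by
    intro y
    rw [hs]
    field_simp [hs]
    ring
  calc ∑ x : F, χ (b * x ^ 2 + x * m)
      = ∑ y : F, χ (b * (y - s) ^ 2 + (y - s) * m) :=
        (Fintype.sum_equiv (Equiv.subRight s) _ _ (fun y => by simp)).symm
    _ = ∑ y : F, χ (-(m ^ 2 / (4 * b))) * χ (b * y ^ 2) := by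
        refine Finset.sum_congr rfl fun y _ => ?_
        rw [key y, AddChar.map_add_eq_mul, mul_comm]
    _ = χ (-(m ^ 2 / (4 * b))) * ∑ y : F, χ (b * y ^ 2) := by rw [Finset.mul_sum]
    _ = _ := by rw [sum_sq_char hF hχ hb]

lemma norm_gaussSum (hF : ringChar F ≠ 2) {χ : AddChar F ℂ} (hχ : χ ≠ 1) :
    ‖gaussSum (etaC F) χ‖ = Real.sqrt (Fintype.card F) := by
  have hprim : χ.IsPrimitive := AddChar.IsPrimitive.of_ne_one hχ
  have hsq := gaussSum_sq (etaC_ne_one hF) etaC_quadratic hprim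
  have hm1 : (-1 : F) ≠ 0 := by norm_num
  have h : ‖gaussSum (etaC F) χ‖ ^ 2 = (Fintype.card F : ℝ) := by
    rw [← norm_pow, hsq, norm_mul, etaC_norm hm1, one_mul, Complex.norm_natCast]
  rw [← Real.sqrt_sq (norm_nonneg _), h]

lemma K_sum {F : Type} [Field F] [Fintype F] {χ : AddChar F ℂ} {e : F} (he : e ≠ 0) :
    ∑ t : F, etaC F t * χ (e * t⁻¹) = etaC F e * gaussSum (etaC F) χ := by
  have hσ : ∀ t : F, ((Equiv.inv F).trans (Equiv.mulLeft₀ e he)) t = e * t⁻¹ := fun t => rfl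
  calc ∑ t : F, etaC F t * χ (e * t⁻¹)
      = ∑ t : F, etaC F e * (etaC F (e * t⁻¹) * χ (e * t⁻¹)) := by
        refine Finset.sum_congr rfl fun t _ => ?_
        by_cases ht : t = 0
        · subst ht; simp [etaC_zero]
        · have hmul : etaC F (e * t⁻¹) = etaC F e * etaC F t := by
            rw [show etaC F (e * t⁻¹) = etaC F e * etaC F t⁻¹ from map_mul (etaC F) e t⁻¹, etaC_inv ht]
          rw [hmul]
          have h2 := etaC_mul_self he
          have h3 : etaC F e * (etaC F e * etaC F t) = etaC F t := by
            rw [← mul_assoc, h2, one_mul]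
          rw [← mul_assoc (etaC F e), h3]
    _ = ∑ i : F, etaC F e *
          (etaC F (((Equiv.inv F).trans (Equiv.mulLeft₀ e he)) i) *
            χ (((Equiv.inv F).trans (Equiv.mulLeft₀ e he)) i)) := rfl
    _ = ∑ u : F, etaC F e * (etaC F u * χ u) :=
        Equiv.sum_comp ((Equiv.inv F).trans (Equiv.mulLeft₀ e he))
          (fun u => etaC F e * (etaC F u * χ u))
    _ = etaC F e * gaussSum (etaC F) χ := by rw [← Finset.mul_sum]; rfl

end Sums

section Key

variable {F : Type} [Field F] [Fintype F]

lemma key_identity (hF : ringChar F ≠ 2) {χ : AddChar F ℂ} (hχ : χ ≠ 1)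
    {d : ℕ} (hd : Odd d) (a : Fin d → F) (ha : ∀ j, a j ≠ 0) (m : Fin d → F) :
    (Fintype.card F : ℂ) *
        ∑ x ∈ univ.filter (fun x : Fin d → F => ∑ j, a j * x j ^ 2 = 0),
          χ (∑ j, x j * m j)
      = (∏ j, ∑ y : F, χ (y * m j))
        + etaC F (∏ j, a j) * gaussSum (etaC F) χ ^ d *
          ∑ t : F, etaC F t * χ ((-(∑ j, (m j) ^ 2 * (a j)⁻¹ / 4)) * t⁻¹) := by
  have hprim : χ.IsPrimitive := AddChar.IsPrimitive.of_ne_one hχ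
  set η := etaC F with hη
  set G := gaussSum η χ with hG
  set e : F := -(∑ j, (m j) ^ 2 * (a j)⁻¹ / 4) with he
  -- Step A : orthogonality
  have stepA :
      (Fintype.card F : ℂ) *
          ∑ x ∈ univ.filter (fun x : Fin d → F => ∑ j, a j * x j ^ 2 = 0),
            χ (∑ j, x j * m j)
        = ∑ t : F, ∑ x : Fin d → F,
            χ (t * (∑ j, a j * x j ^ 2) + ∑ j, x j * m j) := by
    rw [Finset.sum_comm]
    rw [Finset.mul_sum, Finset.sum_filter]
    refine Finset.sum_congr rfl fun x _ => ?_
    have horth : ∑ t : F, χ (t * (∑ j, a j * x j ^ 2))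
        = if (∑ j, a j * x j ^ 2) = 0 then (Fintype.card F : ℂ) else 0 := by
      have := AddChar.sum_mulShift (∑ j, a j * x j ^ 2) hprim
      push_cast at this
      exact this
    have hx : ∑ t : F, χ (t * (∑ j, a j * x j ^ 2) + ∑ j, x j * m j)
        = (if (∑ j, a j * x j ^ 2) = 0 then (Fintype.card F : ℂ) else 0) *
            χ (∑ j, x j * m j) := by
      rw [← horth, Finset.sum_mul]
      exact Finset.sum_congr rfl fun t _ => by rw [AddChar.map_add_eq_mul]
    rw [hx]
    split_ifs <;> simp
  -- Step B : factorization of the inner sum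
  have stepB : ∀ t : F,
      ∑ x : Fin d → F, χ (t * (∑ j, a j * x j ^ 2) + ∑ j, x j * m j)
        = ∏ j, ∑ y : F, χ (t * a j * y ^ 2 + y * m j) := by
    intro t
    have harg : ∀ x : Fin d → F,
        t * (∑ j, a j * x j ^ 2) + ∑ j, x j * m j
          = ∑ j, (t * a j * x j ^ 2 + x j * m j) := by
      intro x
      rw [Finset.mul_sum, ← Finset.sum_add_distrib]
      exact Finset.sum_congr rfl fun j _ => by ring
    calc ∑ x : Fin d → F, χ (t * (∑ j, a j * x j ^ 2) + ∑ j, x j * m j)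
        = ∑ x : Fin d → F, ∏ j, χ (t * a j * x j ^ 2 + x j * m j) := by
          refine Finset.sum_congr rfl fun x _ => ?_
          rw [harg x, addChar_map_sum]
      _ = ∏ j, ∑ y : F, χ (t * a j * y ^ 2 + y * m j) := by
          rw [Finset.prod_univ_sum (fun _ => (univ : Finset F))
            (fun j y => χ (t * a j * y ^ 2 + y * m j))]
          rw [Fintype.piFinset_univ]
  -- Step C : evaluation for t ≠ 0
  have stepC : ∀ t : F, t ≠ 0 →
      ∏ j, ∑ y : F, χ (t * a j * y ^ 2 + y * m j)
        = η (∏ j, a j) * G ^ d * (η t * χ (e * t⁻¹)) := by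
    intro t ht
    obtain ⟨k, hk⟩ := hd
    have hquad : ∀ j, ∑ y : F, χ (t * a j * y ^ 2 + y * m j)
        = χ (-((m j) ^ 2 / (4 * (t * a j)))) * (η (t * a j) * G) := fun j =>
      sum_quad_char hF hχ (mul_ne_zero ht (ha j)) (m j)
    calc ∏ j, ∑ y : F, χ (t * a j * y ^ 2 + y * m j)
        = ∏ j, χ (-((m j) ^ 2 / (4 * (t * a j)))) * (η (t * a j) * G) := by
          exact Finset.prod_congr rfl fun j _ => hquad j
      _ = (∏ j, χ (-((m j) ^ 2 / (4 * (t * a j))))) * ((∏ j, η (t * a j)) * G ^ d) := by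
          rw [Finset.prod_mul_distrib, Finset.prod_mul_distrib, Finset.prod_const]
          rw [Finset.card_univ, Fintype.card_fin]
      _ = χ (e * t⁻¹) * ((η t * η (∏ j, a j)) * G ^ d) := by
          congr 1
          · rw [← addChar_map_sum]
            congr 1
            have hterm : ∀ j, -((m j) ^ 2 / (4 * (t * a j)))
                = ((m j) ^ 2 * (a j)⁻¹ / 4) * -t⁻¹ := by
              intro j
              field_simp
            calc ∑ j, -((m j) ^ 2 / (4 * (t * a j)))
                = ∑ j, ((m j) ^ 2 * (a j)⁻¹ / 4) * -t⁻¹ :=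
                  Finset.sum_congr rfl fun j _ => hterm j
              _ = (∑ j, (m j) ^ 2 * (a j)⁻¹ / 4) * -t⁻¹ := by rw [Finset.sum_mul]
              _ = e * t⁻¹ := by rw [he]; ring
          · congr 1
            calc ∏ j, η (t * a j) = ∏ j, η t * η (a j) :=
                Finset.prod_congr rfl fun j _ => map_mul η t (a j)
              _ = η t ^ d * ∏ j, η (a j) := by
                  rw [Finset.prod_mul_distrib, Finset.prod_const, Finset.card_univ,
                    Fintype.card_fin]
              _ = η t * η (∏ j, a j) := by
                  rw [← map_prod]
                  congr 1
                  rw [hk, pow_succ, pow_mul]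
                  have : η t ^ 2 = 1 := by rw [sq, etaC_mul_self ht]
                  rw [this, one_pow, one_mul]
      _ = _ := by ring
  -- put everything together
  rw [stepA]
  rw [← Finset.sum_erase_add (univ : Finset F) _ (Finset.mem_univ (0 : F))]
  have h0term : ∑ x : Fin d → F, χ ((0 : F) * (∑ j, a j * x j ^ 2) + ∑ j, x j * m j)
      = ∏ j, ∑ y : F, χ (y * m j) := by
    rw [stepB 0]
    refine Finset.prod_congr rfl fun j _ => Finset.sum_congr rfl fun y _ => by
      rw [zero_mul, zero_mul, zero_add]
  rw [h0term]
  have hKzero : ∑ t : F, η t * χ (e * t⁻¹)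
      = ∑ t ∈ (univ : Finset F).erase 0, η t * χ (e * t⁻¹) := by
    rw [← Finset.sum_erase_add (univ : Finset F) _ (Finset.mem_univ (0 : F))]
    have : η (0 : F) = 0 := by simp [hη, etaC, MulChar.ringHomComp_apply]
    rw [this, zero_mul, add_zero]
  rw [hKzero, Finset.mul_sum]
  rw [add_comm]
  congr 1
  refine Finset.sum_congr rfl fun t ht => ?_
  rw [stepB t, stepC t (Finset.ne_of_mem_erase ht)]

end Key

/-- Fourier decay of the surface measure in odd dimensions `d ≥ 3`:
`(dσ)^∨(0) = 1` and `|(dσ)^∨(m)| ≤ C q^{−(d−1)/2}` for `m ≠ 0`, with `C`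
independent of `q`. -/
theorem statement5 (d : ℕ) (hd : 3 ≤ d) (hodd : Odd d) :
    ∃ C : ℝ, 0 < C ∧
      ∀ (F : Type) [Field F] [Fintype F], ringChar F ≠ 2 →
        ∀ (χ : AddChar F ℂ), χ ≠ 1 →
          ∀ a : Fin d → F, (∀ j, a j ≠ 0) →
            (let S : Finset (Fin d → F) :=
              Finset.univ.filter fun x => ∑ j, a j * x j ^ 2 = 0
            let σv : (Fin d → F) → ℂ :=
              fun m => (S.card : ℂ)⁻¹ * ∑ x ∈ S, χ (∑ j, x j * m j)
            σv 0 = 1 ∧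
            ∀ m : Fin d → F, m ≠ 0 →
              ‖σv m‖ ≤ C * (Fintype.card F : ℝ) ^ (-(((d : ℝ) - 1) / 2))) := by
  obtain ⟨k, hk⟩ := hodd
  refine ⟨1, one_pos, ?_⟩
  intro F _ _ hF χ hχ a ha
  dsimp only
  have hq0 : 0 < Fintype.card F := Fintype.card_pos
  have hqR : (0 : ℝ) < (Fintype.card F : ℝ) := by exact_mod_cast hq0
  have hqC : (Fintype.card F : ℂ) ≠ 0 := Nat.cast_ne_zero.mpr hq0.ne'
  have hprim : χ.IsPrimitive := AddChar.IsPrimitive.of_ne_one hχ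
  set q := Fintype.card F with hq
  set S : Finset (Fin d → F) :=
    univ.filter (fun x : Fin d → F => ∑ j, a j * x j ^ 2 = 0) with hS
  set η := etaC F with hη
  set G := gaussSum η χ with hG
  set A : F := ∏ j, a j with hA
  -- the cardinality of S
  have hcardC : (S.card : ℂ) = (q : ℂ) ^ (d - 1) := by
    have h0 := key_identity hF hχ ⟨k, hk⟩ a ha 0
    have hsum0 : ∑ x ∈ S, χ (∑ j, x j * (0 : Fin d → F) j) = (S.card : ℂ) := by
      have h1 : ∀ x ∈ S, χ (∑ j, x j * (0 : Fin d → F) j) = 1 := fun x _ => by simp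
      rw [Finset.sum_congr rfl h1, Finset.sum_const, nsmul_eq_mul, mul_one]
    have hp0 : (∏ j : Fin d, ∑ y : F, χ (y * (0 : Fin d → F) j)) = (q : ℂ) ^ d := by
      calc (∏ j : Fin d, ∑ y : F, χ (y * (0 : Fin d → F) j))
          = ∏ j : Fin d, (q : ℂ) := by
            refine Finset.prod_congr rfl fun j _ => ?_
            simp [Finset.sum_const, Finset.card_univ, hq]
        _ = (q : ℂ) ^ d := by rw [Finset.prod_const, Finset.card_univ, Fintype.card_fin]
    have hK0 : ∑ t : F, η t * χ ((-(∑ j : Fin d, ((0 : Fin d → F) j) ^ 2 * (a j)⁻¹ / 4)) * t⁻¹)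
        = 0 := by
      have : (-(∑ j : Fin d, ((0 : Fin d → F) j) ^ 2 * (a j)⁻¹ / 4)) = (0 : F) := by simp
      rw [this]
      simp only [zero_mul, AddChar.map_zero_eq_one, mul_one]
      exact MulChar.sum_eq_zero_of_ne_one (etaC_ne_one hF)
    rw [hsum0, hp0, hK0, mul_zero, add_zero] at h0
    have hd1 : d = (d - 1) + 1 := (Nat.succ_pred_eq_of_pos (by omega)).symm
    have hpow : (q : ℂ) ^ d = (q : ℂ) * (q : ℂ) ^ (d - 1) := by
      conv_lhs => rw [hd1]
      rw [pow_succ, mul_comm]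
    rw [hpow] at h0
    exact mul_left_cancel₀ hqC h0
  have hSne : (S.card : ℂ) ≠ 0 := by rw [hcardC]; exact pow_ne_zero _ hqC
  have hcardN : S.card = q ^ (d - 1) := by
    have : (S.card : ℂ) = ((q ^ (d - 1) : ℕ) : ℂ) := by push_cast; exact hcardC
    exact_mod_cast this
  constructor
  · -- σv 0 = 1
    have hsum0 : ∑ x ∈ S, χ (∑ j, x j * (0 : Fin d → F) j) = (S.card : ℂ) := by
      have h1 : ∀ x ∈ S, χ (∑ j, x j * (0 : Fin d → F) j) = 1 := fun x _ => by simp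
      rw [Finset.sum_congr rfl h1, Finset.sum_const, nsmul_eq_mul, mul_one]
    rw [hsum0, inv_mul_cancel₀ hSne]
  · -- decay bound
    intro m hm
    have hkey := key_identity hF hχ ⟨k, hk⟩ a ha m
    have hprod0 : (∏ j : Fin d, ∑ y : F, χ (y * m j)) = 0 := by
      obtain ⟨j, hj⟩ := Function.ne_iff.mp hm
      refine Finset.prod_eq_zero (Finset.mem_univ j) ?_
      have hj' : m j ≠ 0 := by simpa using hj
      have := AddChar.sum_mulShift (m j) hprim
      rw [if_neg hj'] at this
      exact_mod_cast this
    rw [hprod0, zero_add] at hkey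
    set e : F := -(∑ j : Fin d, (m j) ^ 2 * (a j)⁻¹ / 4) with he
    have hRHS : (1 : ℝ) * (q : ℝ) ^ (-(((d : ℝ) - 1) / 2)) = ((q : ℝ) ^ k)⁻¹ := by
      have hexp : -(((d : ℝ) - 1) / 2) = -(k : ℝ) := by
        rw [hk]; push_cast; ring
      rw [one_mul, hexp, Real.rpow_neg hqR.le, Real.rpow_natCast]
    by_cases hE : e = 0
    · -- zero case
      have hK : ∑ t : F, η t * χ (e * t⁻¹) = 0 := by
        rw [hE]
        simp only [zero_mul, AddChar.map_zero_eq_one, mul_one]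
        exact MulChar.sum_eq_zero_of_ne_one (etaC_ne_one hF)
      rw [hK, mul_zero] at hkey
      have hT : ∑ x ∈ S, χ (∑ j, x j * m j) = 0 :=
        (mul_eq_zero.mp hkey).resolve_left hqC
      rw [hT, mul_zero, norm_zero, hRHS]
      positivity
    · -- main case
      rw [K_sum hE] at hkey
      have hA0 : A ≠ 0 := Finset.prod_ne_zero_iff.mpr fun j _ => ha j
      -- norms
      have hnorm : (q : ℝ) * ‖∑ x ∈ S, χ (∑ j, x j * m j)‖ = (q : ℝ) ^ (k + 1) := by
        have h1 : ‖(q : ℂ) * ∑ x ∈ S, χ (∑ j, x j * m j)‖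
            = ‖η A * G ^ d * (η e * G)‖ := by rw [hkey]
        rw [norm_mul, norm_mul, norm_mul, norm_mul, Complex.norm_natCast,
          etaC_norm hA0, etaC_norm hE, norm_pow, norm_gaussSum hF hχ] at h1
        rw [h1, one_mul, one_mul]
        have : Real.sqrt (q : ℝ) ^ d * Real.sqrt (q : ℝ) = Real.sqrt (q : ℝ) ^ (d + 1) := by
          rw [pow_succ]
        rw [this]
        have hd1 : d + 1 = 2 * (k + 1) := by omega
        rw [hd1, pow_mul, Real.sq_sqrt hqR.le]
      have hTnorm : ‖∑ x ∈ S, χ (∑ j, x j * m j)‖ = (q : ℝ) ^ k := by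
        have := hnorm
        rw [pow_succ] at this
        field_simp at this ⊢
        nlinarith [norm_nonneg (∑ x ∈ S, χ (∑ j, x j * m j)), hqR]
      rw [norm_mul, norm_inv, Complex.norm_natCast, hTnorm, hcardN, hRHS]
      have hd2 : d - 1 = 2 * k := by omega
      rw [hd2]
      push_cast
      rw [pow_mul]
      have : ((q : ℝ) ^ 2) ^ k = (q : ℝ) ^ k * (q : ℝ) ^ k := by rw [sq, mul_pow]
      rw [this, mul_inv]
      have hqk : (0 : ℝ) < (q : ℝ) ^ k := pow_pos hqR k
      rw [mul_assoc, inv_mul_cancel₀ hqk.ne']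
      simp
end

section
/- Let S ⊂ F_q^d, |S| ≥ c q^{d−1}, with normalized surface measure dσ, and suppose |(dσ)^∨(m)| ≤ C q^{−α/2} for some α > 0 and all m ≠ 0, C independent of q. Then there is C' independent of q such that for every f : F_q^d → ℂ, ‖f ∗ dσ‖_{L^{α+2}(F_q^d,dx)} ≤ C' ‖f‖_{L^{(α+2)/(α+1)}(F_q^d,dx)}. -/
open Finset BigOperators
open scoped Classical

lemma geomBound (r : ℝ) (h0 : 0 ≤ r) (h1 : r < 1) (J : Finset ℕ) :
    ∑ n ∈ J, r ^ n ≤ (1 - r)⁻¹ := by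
  have hsub : J ⊆ Finset.range (J.sup id + 1) := fun n hn =>
    Finset.mem_range.2 (Nat.lt_succ_of_le (Finset.le_sup (f := id) hn))
  have h2 : ∑ n ∈ J, r ^ n ≤ ∑ n ∈ Finset.range (J.sup id + 1), r ^ n :=
    Finset.sum_le_sum_of_subset_of_nonneg hsub (fun i _ _ => pow_nonneg h0 i)
  refine h2.trans ?_
  have hr1 : (0:ℝ) < 1 - r := by linarith
  rw [geom_sum_eq (by linarith : r ≠ 1)]
  have heq : (r ^ (J.sup id + 1) - 1) / (r - 1) = (1 - r ^ (J.sup id + 1)) / (1 - r) := by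
    rw [← neg_div_neg_eq]; ring_nf
  rw [heq, div_eq_mul_inv]
  exact mul_le_of_le_one_left (by positivity) (by nlinarith [pow_nonneg h0 (J.sup id + 1)])

lemma charSumZero {F : Type} [Field F] [Fintype F] (χ : AddChar F ℂ) (hχ : χ ≠ 1)
    {d : ℕ} (m : Fin d → F) (hm : m ≠ 0) :
    ∑ x : Fin d → F, χ (∑ j, x j * m j) = 0 := by
  obtain ⟨t, ht⟩ := AddChar.ne_one_iff.1 hχ
  obtain ⟨j₀, hj₀⟩ := Function.ne_iff.1 hm
  simp only [Pi.zero_apply] at hj₀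
  set u : Fin d → F := Pi.single j₀ (t * (m j₀)⁻¹) with hu
  have hLu : ∑ j, u j * m j = t := by
    rw [Finset.sum_eq_single j₀]
    · simp [hu, Pi.single_eq_same, mul_assoc, inv_mul_cancel₀ hj₀]
    · intro b _ hb; simp [hu, Pi.single_eq_of_ne hb]
    · intro h; exact absurd (Finset.mem_univ j₀) h
  have key : ∑ x : Fin d → F, χ (∑ j, x j * m j) * χ t
      = ∑ x : Fin d → F, χ (∑ j, x j * m j) := by
    refine Fintype.sum_equiv (Equiv.addRight u) _ _ (fun x => ?_)
    simp only [Equiv.coe_addRight]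
    rw [← AddChar.map_add_eq_mul]
    congr 1
    rw [← hLu, ← Finset.sum_add_distrib]
    refine Finset.sum_congr rfl fun j _ => ?_
    simp [add_mul]
  have h0 : (∑ x : Fin d → F, χ (∑ j, x j * m j)) * (χ t - 1) = 0 := by
    rw [mul_sub, mul_one, Finset.sum_mul]
    simp only [key, sub_self]
  rcases mul_eq_zero.1 h0 with h | h
  · exact h
  · exact absurd (sub_eq_zero.1 h) ht

section fourier
variable {F : Type} [Field F] [Fintype F] {d : ℕ}

private def dotp (x m : Fin d → F) : F := ∑ j, x j * m j

private lemma dotp_comm (x m : Fin d → F) : dotp x m = dotp m x :=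
  Finset.sum_congr rfl fun j _ => mul_comm _ _

private lemma dotp_add_left (x y m : Fin d → F) : dotp (x + y) m = dotp x m + dotp y m := by
  simp only [dotp, ← Finset.sum_add_distrib]
  exact Finset.sum_congr rfl fun j _ => by simp [add_mul]

private lemma dotp_sub_left (x y m : Fin d → F) : dotp (x - y) m = dotp x m - dotp y m := by
  simp only [dotp, ← Finset.sum_sub_distrib]
  exact Finset.sum_congr rfl fun j _ => by simp [sub_mul]

private lemma dotp_zero_left (m : Fin d → F) : dotp 0 m = 0 := by
  simp [dotp]

private lemma dotp_zero_right (x : Fin d → F) : dotp x 0 = 0 := by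
  simp [dotp]

private lemma dotp_neg_right (x m : Fin d → F) : dotp x (-m) = -(dotp x m) := by
  simp [dotp, mul_neg, Finset.sum_neg_distrib]

private lemma conj_char (χ : AddChar F ℂ) (a : F) :
    (starRingEnd ℂ) (χ a) = χ (-a) := by
  rw [AddChar.map_neg_eq_inv]
  exact (Complex.inv_eq_conj (by simpa using AddChar.norm_apply χ a)).symm

private lemma charSumIte (χ : AddChar F ℂ) (hχ : χ ≠ 1) (m : Fin d → F) :
    ∑ x : Fin d → F, χ (dotp x m) =
      if m = 0 then (Fintype.card (Fin d → F) : ℂ) else 0 := by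
  split_ifs with h
  · subst h; simp [dotp_zero_right, Finset.card_univ]
  · exact charSumZero χ hχ m h

/-- unnormalized Fourier transform -/
private noncomputable def ftr (χ : AddChar F ℂ) (g : (Fin d → F) → ℂ) (m : Fin d → F) : ℂ :=
  ∑ x, g x * χ (-(dotp x m))

private lemma parseval (χ : AddChar F ℂ) (hχ : χ ≠ 1) (g : (Fin d → F) → ℂ) :
    ∑ m, ftr χ g m * (starRingEnd ℂ) (ftr χ g m)
      = (Fintype.card (Fin d → F) : ℂ) * ∑ x, g x * (starRingEnd ℂ) (g x) := by
  have expand : ∀ m, ftr χ g m * (starRingEnd ℂ) (ftr χ g m)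
      = ∑ x, ∑ y, g x * (starRingEnd ℂ) (g y) * χ (dotp (y - x) m) := by
    intro m
    rw [ftr, map_sum, Finset.sum_mul_sum]
    refine Finset.sum_congr rfl fun x _ => Finset.sum_congr rfl fun y _ => ?_
    rw [map_mul, conj_char, neg_neg, dotp_sub_left]
    have : χ (dotp y m - dotp x m) = χ (-(dotp x m)) * χ (dotp y m) := by
      rw [← AddChar.map_add_eq_mul]; ring_nf
    rw [this]; ring
  calc ∑ m, ftr χ g m * (starRingEnd ℂ) (ftr χ g m)
      = ∑ m, ∑ x, ∑ y, g x * (starRingEnd ℂ) (g y) * χ (dotp (y - x) m) := by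
        exact Finset.sum_congr rfl fun m _ => expand m
    _ = ∑ x, ∑ y, g x * (starRingEnd ℂ) (g y) * ∑ m, χ (dotp (y - x) m) := by
        rw [Finset.sum_comm]
        refine Finset.sum_congr rfl fun x _ => ?_
        rw [Finset.sum_comm]
        refine Finset.sum_congr rfl fun y _ => ?_
        rw [Finset.mul_sum]
    _ = (Fintype.card (Fin d → F) : ℂ) * ∑ x, g x * (starRingEnd ℂ) (g x) := by
        rw [Finset.mul_sum]
        refine Finset.sum_congr rfl fun x _ => ?_
        rw [Finset.sum_eq_single x]
        · have : ∑ m, χ (dotp (x - x) m) = (Fintype.card (Fin d → F) : ℂ) := by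
            rw [sub_self]
            simp [dotp_zero_left, Finset.card_univ]
          rw [this]; ring
        · intro y _ hyx
          have hz : ∑ m, χ (dotp (y - x) m) = 0 := by
            have : ∀ m, dotp (y - x) m = dotp m (y - x) := fun m => dotp_comm _ _
            simp_rw [this]
            exact charSumZero χ hχ (y - x) (sub_ne_zero.2 hyx)
          rw [hz, mul_zero]
        · intro h; exact absurd (Finset.mem_univ x) h
end fourier

section oper
variable {F : Type} [Field F] [Fintype F] {d : ℕ}

private noncomputable def Eop (S : Finset (Fin d → F)) (g : (Fin d → F) → ℂ)
    (x : Fin d → F) : ℂ :=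
  (S.card : ℂ)⁻¹ * ∑ y ∈ S, g (x - y) - (Fintype.card (Fin d → F) : ℂ)⁻¹ * ∑ z, g z

private lemma ftr_Eop (χ : AddChar F ℂ) (hχ : χ ≠ 1) (S : Finset (Fin d → F))
    (hS : S.Nonempty) (g : (Fin d → F) → ℂ) (m : Fin d → F) :
    ftr χ (Eop S g) m =
      (if m = 0 then 0 else (S.card : ℂ)⁻¹ * ∑ y ∈ S, χ (-(dotp y m))) * ftr χ g m := by
  have hn : (Fintype.card (Fin d → F) : ℂ) ≠ 0 := by
    exact_mod_cast Nat.cast_ne_zero.mpr Fintype.card_ne_zero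
  have hs : (S.card : ℂ) ≠ 0 := Nat.cast_ne_zero.mpr (Finset.card_ne_zero_of_mem hS.choose_spec)
  have term1 : ∀ y : Fin d → F,
      ∑ x, g (x - y) * χ (-(dotp x m)) = χ (-(dotp y m)) * ftr χ g m := by
    intro y
    have step : ∑ x, g (x - y) * χ (-(dotp x m))
        = ∑ z, g z * (χ (-(dotp z m)) * χ (-(dotp y m))) := by
      refine (Fintype.sum_equiv (Equiv.addRight y)
        (fun z => g z * (χ (-(dotp z m)) * χ (-(dotp y m))))
        (fun x => g (x - y) * χ (-(dotp x m))) (fun z => ?_)).symm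
      simp only [Equiv.coe_addRight, add_sub_cancel_right]
      rw [← AddChar.map_add_eq_mul, dotp_add_left, neg_add]
    rw [step, ftr, Finset.mul_sum]
    exact Finset.sum_congr rfl fun z _ => by ring
  have expand : ftr χ (Eop S g) m
      = (S.card : ℂ)⁻¹ * ∑ y ∈ S, (χ (-(dotp y m)) * ftr χ g m)
        - (Fintype.card (Fin d → F) : ℂ)⁻¹ * (∑ z, g z) * ∑ x, χ (-(dotp x m)) := by
    rw [ftr]
    simp only [Eop, sub_mul, Finset.sum_sub_distrib]
    have cA : ∑ x, ((S.card : ℂ)⁻¹ * ∑ y ∈ S, g (x - y)) * χ (-(dotp x m))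
        = (S.card : ℂ)⁻¹ * ∑ y ∈ S, (χ (-(dotp y m)) * ftr χ g m) := by
      have e1 : ∀ x, ((S.card : ℂ)⁻¹ * ∑ y ∈ S, g (x - y)) * χ (-(dotp x m))
          = (S.card : ℂ)⁻¹ * ∑ y ∈ S, g (x - y) * χ (-(dotp x m)) := by
        intro x; rw [mul_assoc, Finset.sum_mul]
      simp_rw [e1]
      rw [← Finset.mul_sum, Finset.sum_comm]
      congr 1
      exact Finset.sum_congr rfl fun y _ => term1 y
    have cB : ∑ x, ((Fintype.card (Fin d → F) : ℂ)⁻¹ * ∑ z, g z) * χ (-(dotp x m))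
        = (Fintype.card (Fin d → F) : ℂ)⁻¹ * (∑ z, g z) * ∑ x, χ (-(dotp x m)) := by
      rw [← Finset.mul_sum, mul_assoc]
    rw [cA, cB]
  have sumchi : ∑ x, χ (-(dotp x m))
      = if m = 0 then (Fintype.card (Fin d → F) : ℂ) else 0 := by
    have : ∀ x : Fin d → F, χ (-(dotp x m)) = χ (dotp x (-m)) := fun x => by
      rw [dotp_neg_right]
    simp_rw [this]
    rw [charSumIte χ hχ]
    simp [neg_eq_zero]
  rw [expand, sumchi]
  split_ifs with h
  · subst h
    have h1 : ∀ y : Fin d → F, χ (-(dotp y 0)) = 1 := fun y => by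
      rw [dotp_zero_right, neg_zero, AddChar.map_zero_eq_one]
    have h2 : ftr χ g 0 = ∑ z, g z := by
      rw [ftr]
      refine Finset.sum_congr rfl fun x _ => ?_
      rw [dotp_zero_right, neg_zero, AddChar.map_zero_eq_one, mul_one]
    simp only [h1, h2, one_mul, Finset.sum_const, nsmul_eq_mul]
    field_simp
    ring
  · rw [mul_zero, sub_zero, mul_assoc, Finset.sum_mul]

private lemma parsevalR (χ : AddChar F ℂ) (hχ : χ ≠ 1) (g : (Fin d → F) → ℂ) :
    ∑ m, Complex.normSq (ftr χ g m)
      = (Fintype.card (Fin d → F) : ℝ) * ∑ x, Complex.normSq (g x) := by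
  have h := parseval χ hχ g
  simp only [Complex.mul_conj] at h
  exact_mod_cast h

private lemma l2bound (χ : AddChar F ℂ) (hχ : χ ≠ 1) (S : Finset (Fin d → F))
    (hS : S.Nonempty) (B : ℝ) (hB : 0 ≤ B)
    (hdecay : ∀ m : Fin d → F, m ≠ 0 → ‖(S.card : ℂ)⁻¹ * ∑ y ∈ S, χ (dotp y m)‖ ≤ B)
    (g : (Fin d → F) → ℂ) :
    ∑ x, Complex.normSq (Eop S g x) ≤ B ^ 2 * ∑ x, Complex.normSq (g x) := by
  have hn : (0:ℝ) < (Fintype.card (Fin d → F) : ℝ) := by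
    exact_mod_cast Fintype.card_pos
  rw [← mul_le_mul_iff_right₀ hn, ← parsevalR χ hχ (Eop S g)]
  have key : ∑ m, Complex.normSq (ftr χ (Eop S g) m)
      ≤ B ^ 2 * ∑ m, Complex.normSq (ftr χ g m) := by
    rw [Finset.mul_sum]
    refine Finset.sum_le_sum fun m _ => ?_
    rw [ftr_Eop χ hχ S hS g m, Complex.normSq_mul]
    split_ifs with h
    · simp only [Complex.normSq_zero, zero_mul]
      exact mul_nonneg (sq_nonneg B) (Complex.normSq_nonneg _)
    · have hd : ‖(S.card : ℂ)⁻¹ * ∑ y ∈ S, χ (-(dotp y m))‖ ≤ B := by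
        have hrw : ∀ y : Fin d → F, χ (-(dotp y m)) = χ (dotp y (-m)) := fun y => by
          rw [dotp_neg_right]
        simp_rw [hrw]
        exact hdecay (-m) (neg_ne_zero.2 h)
      have h1 : Complex.normSq ((S.card : ℂ)⁻¹ * ∑ y ∈ S, χ (-(dotp y m))) ≤ B ^ 2 := by
        rw [Complex.normSq_eq_norm_sq]
        exact pow_le_pow_left₀ (norm_nonneg _) hd 2
      exact mul_le_mul_of_nonneg_right h1 (Complex.normSq_nonneg _)
  refine key.trans ?_
  rw [parsevalR χ hχ g]
  exact le_of_eq (by ring)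
end oper

lemma interp {X : Type} [Fintype X] (T : (X → ℂ) → (X → ℂ))
    (hadd : ∀ g b : X → ℂ, T (g + b) = T g + T b)
    (w p A B : ℝ) (hw : 0 ≤ w) (hp : 2 < p) (hA : 0 < A) (hB : 0 ≤ B)
    (hinf : ∀ g : X → ℂ, ∀ x, ‖T g x‖ ≤ A * ∑ z, w * ‖g z‖)
    (h2 : ∀ g : X → ℂ, ∑ x, w * ‖T g x‖ ^ (2:ℝ) ≤ B ^ 2 * ∑ z, w * ‖g z‖ ^ (2:ℝ))
    (f : X → ℂ)
    (hf1 : ∑ z, w * ‖f z‖ ≤ 1)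
    (hfp : ∑ z, w * ‖f z‖ ^ (p / (p - 1)) ≤ 1) :
    ∑ x, w * ‖T f x‖ ^ p
      ≤ (4:ℝ) ^ p * B ^ 2 * A ^ (p - 2) * (1 - (2:ℝ) ^ (-(p - 2)))⁻¹ := by
  have hp1 : (1:ℝ) < p := by linarith
  have hp0 : (0:ℝ) < p := by linarith
  have hpm1 : (0:ℝ) < p - 1 := by linarith
  have hpm2 : (0:ℝ) < p - 2 := by linarith
  set p' : ℝ := p / (p - 1) with hp'def
  have hp'1 : 1 ≤ p' := by rw [hp'def, le_div_iff₀ hpm1]; linarith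
  set r : ℝ := (2:ℝ) ^ (-(p - 2)) with hrdef
  have hr0 : 0 < r := Real.rpow_pos_of_pos two_pos _
  have hr1 : r < 1 := Real.rpow_lt_one_of_one_lt_of_neg one_lt_two (by linarith)
  -- dyadic levels
  set lam : ℕ → ℝ := fun j => A * (2:ℝ) ^ (-(j:ℝ)) with hlamdef
  have hlam_pos : ∀ j, 0 < lam j := fun j => mul_pos hA (Real.rpow_pos_of_pos two_pos _)
  set sthr : ℕ → ℝ := fun j => (2:ℝ) ^ ((j:ℝ) * (p - 1)) with hsdef
  have hs_pos : ∀ j, 0 < sthr j := fun j => Real.rpow_pos_of_pos two_pos _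
  -- split functions
  set gfun : ℕ → (X → ℂ) := fun j z => if ‖f z‖ ≤ sthr j then f z else 0 with hgdef
  set bfun : ℕ → (X → ℂ) := fun j z => if ‖f z‖ ≤ sthr j then 0 else f z with hbdef
  have hsplit : ∀ j, gfun j + bfun j = f := by
    intro j; funext z
    simp only [hgdef, hbdef, Pi.add_apply]
    split_ifs <;> ring
  have hTsplit : ∀ j x, T f x = T (gfun j) x + T (bfun j) x := by
    intro j x
    conv_lhs => rw [← hsplit j]
    rw [hadd]; rfl
  -- Fact 1 : the big part has small L¹ norm
  have key1 : ∀ j, A * ∑ z, w * ‖bfun j z‖ ≤ lam j := by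
    intro j
    have hpt : ∀ z, w * ‖bfun j z‖ ≤ w * (‖f z‖ ^ p' * (sthr j) ^ (1 - p')) := by
      intro z
      refine mul_le_mul_of_nonneg_left ?_ hw
      simp only [hbdef]
      split_ifs with h
      · simp only [norm_zero]
        positivity
      · push_neg at h
        have ht0 : 0 < ‖f z‖ := (hs_pos j).trans h
        have hsplitnorm : ‖f z‖ ^ p' * ‖f z‖ ^ (1 - p') = ‖f z‖ := by
          rw [← Real.rpow_add ht0]
          norm_num
        calc ‖f z‖ = ‖f z‖ ^ p' * ‖f z‖ ^ (1 - p') := hsplitnorm.symm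
          _ ≤ ‖f z‖ ^ p' * (sthr j) ^ (1 - p') := by
              refine mul_le_mul_of_nonneg_left ?_ (by positivity)
              exact Real.rpow_le_rpow_of_nonpos (hs_pos j) h.le (by linarith)
    have hsum : ∑ z, w * ‖bfun j z‖ ≤ (sthr j) ^ (1 - p') * ∑ z, w * ‖f z‖ ^ p' := by
      rw [Finset.mul_sum]
      refine Finset.sum_le_sum fun z _ => (hpt z).trans (le_of_eq (by ring))
    have hs1p : (sthr j) ^ (1 - p') = (2:ℝ) ^ (-(j:ℝ)) := by
      rw [hsdef]
      rw [← Real.rpow_mul (by norm_num : (0:ℝ) ≤ 2)]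
      congr 1
      rw [hp'def]
      field_simp
      ring
    calc A * ∑ z, w * ‖bfun j z‖ ≤ A * ((sthr j) ^ (1 - p') * ∑ z, w * ‖f z‖ ^ p') :=
          mul_le_mul_of_nonneg_left hsum hA.le
      _ ≤ A * ((sthr j) ^ (1 - p') * 1) := by
          refine mul_le_mul_of_nonneg_left (mul_le_mul_of_nonneg_left hfp (by positivity)) hA.le
      _ = lam j := by rw [mul_one, hs1p]
  -- Fact 2 : L² bound for the good part
  have key2 : ∀ j, ∑ x, w * ‖T (gfun j) x‖ ^ (2:ℝ)
      ≤ B ^ 2 * ∑ z, w * (if ‖f z‖ ≤ sthr j then ‖f z‖ ^ (2:ℝ) else 0) := by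
    intro j
    refine (h2 (gfun j)).trans (le_of_eq ?_)
    congr 1
    refine Finset.sum_congr rfl fun z _ => ?_
    congr 1
    simp only [hgdef]
    split_ifs with h
    · rfl
    · simp only [norm_zero]
      rw [Real.zero_rpow (by norm_num : (2:ℝ) ≠ 0)]
  -- existence of a dyadic level for each x with T f x ≠ 0
  have hTfA : ∀ x, ‖T f x‖ ≤ A := by
    intro x
    calc ‖T f x‖ ≤ A * ∑ z, w * ‖f z‖ := hinf f x
      _ ≤ A * 1 := mul_le_mul_of_nonneg_left hf1 hA.le
      _ = A := mul_one A
  have hex : ∀ x : X, T f x ≠ 0 → ∃ j : ℕ, 2 * lam j < ‖T f x‖ := by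
    intro x hx
    have hTx : 0 < ‖T f x‖ := norm_pos_iff.2 hx
    obtain ⟨n, hn⟩ := pow_unbounded_of_one_lt (2 * A / ‖T f x‖) (one_lt_two (α := ℝ))
    refine ⟨n, ?_⟩
    have h2n : (0:ℝ) < 2 ^ n := by positivity
    rw [div_lt_iff₀ hTx] at hn
    have hlam_eq : lam n = A * ((2:ℝ) ^ n)⁻¹ := by
      simp only [hlamdef]
      rw [Real.rpow_neg (by norm_num : (0:ℝ) ≤ 2), Real.rpow_natCast]
    rw [hlam_eq]
    rw [mul_comm ((2:ℝ)^n) (‖T f x‖)] at hn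
    calc 2 * (A * ((2:ℝ) ^ n)⁻¹) = 2 * A / 2 ^ n := by ring
      _ < ‖T f x‖ := by rwa [div_lt_iff₀ h2n]
  set idx : X → ℕ := fun x => if h : ∃ j : ℕ, 2 * lam j < ‖T f x‖ then Nat.find h else 0
    with hidxdef
  have hidx1 : ∀ x, T f x ≠ 0 → 2 * lam (idx x) < ‖T f x‖ := by
    intro x hx
    simp only [hidxdef]
    rw [dif_pos (hex x hx)]
    exact Nat.find_spec (hex x hx)
  have hlam_succ : ∀ k : ℕ, lam k = 2 * lam (k + 1) := by
    intro k
    simp only [hlamdef]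
    have : (2:ℝ) ^ (-((k:ℝ) + 1)) = (2:ℝ) ^ (-(k:ℝ)) * (2:ℝ) ^ (-(1:ℝ)) := by
      rw [← Real.rpow_add two_pos]; ring_nf
    push_cast
    rw [this, Real.rpow_neg_one]
    ring
  have hidx2 : ∀ x, T f x ≠ 0 → ‖T f x‖ ≤ 4 * lam (idx x) := by
    intro x hx
    rcases Nat.eq_zero_or_eq_succ_pred (idx x) with h0 | hsucc
    · rw [h0]
      have : lam 0 = A := by
        simp only [hlamdef]; norm_num
      rw [this]
      linarith [hTfA x]
    · set k := (idx x).pred with hk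
      have hklt : k < idx x := by omega
      have hmin : ¬ (2 * lam k < ‖T f x‖) := by
        have := Nat.find_min (hex x hx) (by
          simp only [hidxdef] at hklt
          rw [dif_pos (hex x hx)] at hklt
          exact hklt)
        simpa only [hidxdef, dif_pos (hex x hx)] using this
      push_neg at hmin
      have : lam k = 2 * lam (idx x) := by
        rw [hsucc] at *
        exact hlam_succ k
      linarith
  have hidx3 : ∀ x, T f x ≠ 0 → lam (idx x) < ‖T (gfun (idx x)) x‖ := by
    intro x hx
    set j := idx x
    have hTb : ‖T (bfun j) x‖ ≤ lam j :=
      (hinf (bfun j) x).trans (key1 j)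
    have hTg : ‖T f x‖ - ‖T (bfun j) x‖ ≤ ‖T (gfun j) x‖ := by
      have heq : T (gfun j) x = T f x - T (bfun j) x := by
        rw [hTsplit j x]; ring
      calc ‖T f x‖ - ‖T (bfun j) x‖ ≤ ‖T f x - T (bfun j) x‖ := norm_sub_norm_le _ _
        _ = ‖T (gfun j) x‖ := by rw [heq]
    have := hidx1 x hx
    linarith
  -- pointwise bound
  have hpoint : ∀ x, T f x ≠ 0 →
      w * ‖T f x‖ ^ p
        ≤ (4:ℝ) ^ p * (w * ((lam (idx x)) ^ (p - 2) * ‖T (gfun (idx x)) x‖ ^ (2:ℝ))) := by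
    intro x hx
    set j := idx x
    have hlj := hlam_pos j
    have step1 : ‖T f x‖ ^ p ≤ (4 * lam j) ^ p :=
      Real.rpow_le_rpow (norm_nonneg _) (hidx2 x hx) hp0.le
    have step2 : (4 * lam j) ^ p = (4:ℝ) ^ p * ((lam j) ^ (p - 2) * (lam j) ^ (2:ℝ)) := by
      rw [Real.mul_rpow (by norm_num) hlj.le, ← Real.rpow_add hlj]
      norm_num
    have step3 : (lam j) ^ (2:ℝ) ≤ ‖T (gfun j) x‖ ^ (2:ℝ) :=
      Real.rpow_le_rpow hlj.le (hidx3 x hx).le (by norm_num)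
    calc w * ‖T f x‖ ^ p ≤ w * ((4:ℝ) ^ p * ((lam j) ^ (p - 2) * (lam j) ^ (2:ℝ))) := by
          rw [← step2]
          exact mul_le_mul_of_nonneg_left step1 hw
      _ ≤ w * ((4:ℝ) ^ p * ((lam j) ^ (p - 2) * ‖T (gfun j) x‖ ^ (2:ℝ))) := by
          refine mul_le_mul_of_nonneg_left ?_ hw
          refine mul_le_mul_of_nonneg_left ?_ (by positivity)
          exact mul_le_mul_of_nonneg_left step3 (by positivity)
      _ = (4:ℝ) ^ p * (w * ((lam j) ^ (p - 2) * ‖T (gfun j) x‖ ^ (2:ℝ))) := by ring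
  -- restrict the sum to the support of T f
  set G : Finset X := Finset.univ.filter (fun x => T f x ≠ 0) with hGdef
  have hsum_restrict : ∑ x, w * ‖T f x‖ ^ p = ∑ x ∈ G, w * ‖T f x‖ ^ p := by
    refine (Finset.sum_subset (Finset.subset_univ G) ?_).symm
    intro x _ hxG
    have : T f x = 0 := by
      by_contra hne
      exact hxG (Finset.mem_filter.2 ⟨Finset.mem_univ x, hne⟩)
    rw [this, norm_zero, Real.zero_rpow hp0.ne', mul_zero]
  -- group by the level
  set J : Finset ℕ := G.image idx with hJdef
  have hgroup : ∑ x ∈ G, w * ((lam (idx x)) ^ (p - 2) * ‖T (gfun (idx x)) x‖ ^ (2:ℝ))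
      = ∑ j ∈ J, ∑ x ∈ G.filter (fun x => idx x = j),
          w * ((lam (idx x)) ^ (p - 2) * ‖T (gfun (idx x)) x‖ ^ (2:ℝ)) :=
    (Finset.sum_fiberwise_of_maps_to (fun x hx => Finset.mem_image_of_mem idx hx) _).symm
  have hinner : ∀ j ∈ J, ∑ x ∈ G.filter (fun x => idx x = j),
          w * ((lam (idx x)) ^ (p - 2) * ‖T (gfun (idx x)) x‖ ^ (2:ℝ))
      ≤ (lam j) ^ (p - 2) *
          (B ^ 2 * ∑ z, w * (if ‖f z‖ ≤ sthr j then ‖f z‖ ^ (2:ℝ) else 0)) := by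
    intro j _
    have step1 : ∑ x ∈ G.filter (fun x => idx x = j),
          w * ((lam (idx x)) ^ (p - 2) * ‖T (gfun (idx x)) x‖ ^ (2:ℝ))
        = ∑ x ∈ G.filter (fun x => idx x = j),
          (lam j) ^ (p - 2) * (w * ‖T (gfun j) x‖ ^ (2:ℝ)) := by
      refine Finset.sum_congr rfl fun x hx => ?_
      have hxj : idx x = j := (Finset.mem_filter.1 hx).2
      rw [hxj]; ring
    rw [step1, ← Finset.mul_sum]
    refine mul_le_mul_of_nonneg_left ?_ (by positivity)
    refine le_trans ?_ (key2 j)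
    refine Finset.sum_le_sum_of_subset_of_nonneg (Finset.subset_univ _) ?_
    intro x _ _
    positivity
  -- per-z geometric tail bound
  have hperz : ∀ z, ∑ j ∈ J, (lam j) ^ (p - 2) * (if ‖f z‖ ≤ sthr j then ‖f z‖ ^ (2:ℝ) else 0)
      ≤ A ^ (p - 2) * (1 - r)⁻¹ * ‖f z‖ ^ p' := by
    intro z
    by_cases hz : f z = 0
    · simp only [hz, norm_zero, Real.zero_rpow (by norm_num : (2:ℝ) ≠ 0), ite_self, mul_zero,
        Finset.sum_const_zero, Real.zero_rpow (by positivity : p' ≠ 0)]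
      exact le_rfl
    · have ht : 0 < ‖f z‖ := norm_pos_iff.2 hz
      set t := ‖f z‖ with htdef
      set J' : Finset ℕ := J.filter (fun j => t ≤ sthr j) with hJ'def
      have hLHS : ∑ j ∈ J, (lam j) ^ (p - 2) * (if t ≤ sthr j then t ^ (2:ℝ) else 0)
          = ∑ j ∈ J', (lam j) ^ (p - 2) * t ^ (2:ℝ) := by
        rw [hJ'def, Finset.sum_filter]
        refine Finset.sum_congr rfl fun j _ => ?_
        split_ifs <;> simp
      rw [hLHS]
      rcases Finset.eq_empty_or_nonempty J' with hJe | hJne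
      · rw [hJe, Finset.sum_empty]
        have h1r : (0:ℝ) < 1 - r := by linarith
        positivity
      · set j₀ := J'.min' hJne with hj0
        have hj0mem := J'.min'_mem hJne
        have hj0t : t ≤ sthr j₀ := (Finset.mem_filter.1 hj0mem).2
        have hterm : ∀ j ∈ J', (lam j) ^ (p - 2) * t ^ (2:ℝ)
            ≤ A ^ (p - 2) * t ^ p' * r ^ (j - j₀) := by
          intro j hj
          have hj0le : j₀ ≤ j := Finset.min'_le J' j hj
          have hcast : ((j - j₀ : ℕ) : ℝ) = (j:ℝ) - (j₀:ℝ) := by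
            push_cast [Nat.cast_sub hj0le]; ring
          have e1 : (lam j) ^ (p - 2)
              = A ^ (p - 2) * (2:ℝ) ^ (-(j:ℝ) * (p - 2)) := by
            simp only [hlamdef]
            rw [Real.mul_rpow hA.le (Real.rpow_nonneg (by norm_num) _),
              ← Real.rpow_mul (by norm_num : (0:ℝ) ≤ 2)]
          have e2 : (2:ℝ) ^ (-(j:ℝ) * (p - 2))
              = (2:ℝ) ^ (-(j₀:ℝ) * (p - 2)) * r ^ (j - j₀) := by
            have er : r ^ (j - j₀) = (2:ℝ) ^ ((-(p - 2)) * ((j - j₀ : ℕ) : ℝ)) := by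
              rw [hrdef, Real.rpow_mul (by norm_num : (0:ℝ) ≤ 2), Real.rpow_natCast]
            rw [er, ← Real.rpow_add two_pos]
            congr 1
            rw [hcast]; ring
          have e3 : (2:ℝ) ^ (-(j₀:ℝ) * (p - 2)) ≤ t ^ (-(p - 2) / (p - 1)) := by
            have hnonpos : -(p - 2) / (p - 1) ≤ 0 :=
              div_nonpos_of_nonpos_of_nonneg (by linarith) (by linarith)
            have := Real.rpow_le_rpow_of_nonpos ht hj0t hnonpos
            have heq : sthr j₀ ^ (-(p - 2) / (p - 1)) = (2:ℝ) ^ (-(j₀:ℝ) * (p - 2)) := by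
              simp only [hsdef]
              rw [← Real.rpow_mul (by norm_num : (0:ℝ) ≤ 2)]
              congr 1
              field_simp
            rw [← heq]
            exact this
          have e4 : t ^ (-(p - 2) / (p - 1)) * t ^ (2:ℝ) = t ^ p' := by
            rw [← Real.rpow_add ht]
            congr 1
            rw [hp'def]
            field_simp
            ring
          calc (lam j) ^ (p - 2) * t ^ (2:ℝ)
              = A ^ (p - 2) * ((2:ℝ) ^ (-(j₀:ℝ) * (p - 2)) * r ^ (j - j₀)) * t ^ (2:ℝ) := by
                rw [e1, e2]
            _ ≤ A ^ (p - 2) * (t ^ (-(p - 2) / (p - 1)) * r ^ (j - j₀)) * t ^ (2:ℝ) := by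
                have hr' : (0:ℝ) ≤ r ^ (j - j₀) := by positivity
                have ht2 : (0:ℝ) ≤ t ^ (2:ℝ) := by positivity
                refine mul_le_mul_of_nonneg_right ?_ ht2
                refine mul_le_mul_of_nonneg_left ?_ (by positivity)
                exact mul_le_mul_of_nonneg_right e3 hr'
            _ = A ^ (p - 2) * t ^ p' * r ^ (j - j₀) := by
                rw [← e4]; ring
        have hgeo : ∑ j ∈ J', r ^ (j - j₀) ≤ (1 - r)⁻¹ := by
          have hinj : Set.InjOn (fun j => j - j₀) J' := by
            intro a ha b hb hab
            have ha' : j₀ ≤ a := Finset.min'_le J' a ha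
            have hb' : j₀ ≤ b := Finset.min'_le J' b hb
            simp only at hab
            omega
          have := geomBound r hr0.le hr1 (J'.image (fun j => j - j₀))
          rwa [Finset.sum_image (fun a ha b hb hab => hinj ha hb hab)] at this
        calc ∑ j ∈ J', (lam j) ^ (p - 2) * t ^ (2:ℝ)
            ≤ ∑ j ∈ J', A ^ (p - 2) * t ^ p' * r ^ (j - j₀) := Finset.sum_le_sum hterm
          _ = A ^ (p - 2) * t ^ p' * ∑ j ∈ J', r ^ (j - j₀) := by rw [← Finset.mul_sum]
          _ ≤ A ^ (p - 2) * t ^ p' * (1 - r)⁻¹ := by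
              refine mul_le_mul_of_nonneg_left hgeo (by positivity)
          _ = A ^ (p - 2) * (1 - r)⁻¹ * t ^ p' := by ring
  -- swap the double sum
  have hswap : ∑ j ∈ J, (lam j) ^ (p - 2) *
        (B ^ 2 * ∑ z, w * (if ‖f z‖ ≤ sthr j then ‖f z‖ ^ (2:ℝ) else 0))
      = B ^ 2 * ∑ z, w *
          (∑ j ∈ J, (lam j) ^ (p - 2) * (if ‖f z‖ ≤ sthr j then ‖f z‖ ^ (2:ℝ) else 0)) := by
    simp_rw [Finset.mul_sum]
    rw [Finset.sum_comm]
    refine Finset.sum_congr rfl fun z _ => Finset.sum_congr rfl fun j _ => by ring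
  -- final assembly
  calc ∑ x, w * ‖T f x‖ ^ p
      = ∑ x ∈ G, w * ‖T f x‖ ^ p := hsum_restrict
    _ ≤ ∑ x ∈ G, (4:ℝ) ^ p * (w * ((lam (idx x)) ^ (p - 2) * ‖T (gfun (idx x)) x‖ ^ (2:ℝ))) :=
        Finset.sum_le_sum fun x hx => hpoint x (Finset.mem_filter.1 hx).2
    _ = (4:ℝ) ^ p * ∑ x ∈ G, w * ((lam (idx x)) ^ (p - 2) * ‖T (gfun (idx x)) x‖ ^ (2:ℝ)) := by
        rw [Finset.mul_sum]
    _ = (4:ℝ) ^ p * ∑ j ∈ J, ∑ x ∈ G.filter (fun x => idx x = j),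
          w * ((lam (idx x)) ^ (p - 2) * ‖T (gfun (idx x)) x‖ ^ (2:ℝ)) := by rw [hgroup]
    _ ≤ (4:ℝ) ^ p * ∑ j ∈ J, (lam j) ^ (p - 2) *
          (B ^ 2 * ∑ z, w * (if ‖f z‖ ≤ sthr j then ‖f z‖ ^ (2:ℝ) else 0)) := by
        refine mul_le_mul_of_nonneg_left (Finset.sum_le_sum hinner) (by positivity)
    _ = (4:ℝ) ^ p * (B ^ 2 * ∑ z, w *
          (∑ j ∈ J, (lam j) ^ (p - 2) * (if ‖f z‖ ≤ sthr j then ‖f z‖ ^ (2:ℝ) else 0))) := by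
        rw [hswap]
    _ ≤ (4:ℝ) ^ p * (B ^ 2 * ∑ z, w * (A ^ (p - 2) * (1 - r)⁻¹ * ‖f z‖ ^ p')) := by
        refine mul_le_mul_of_nonneg_left ?_ (by positivity)
        refine mul_le_mul_of_nonneg_left ?_ (by positivity)
        refine Finset.sum_le_sum fun z _ => ?_
        exact mul_le_mul_of_nonneg_left (hperz z) hw
    _ = (4:ℝ) ^ p * B ^ 2 * A ^ (p - 2) * (1 - r)⁻¹ * ∑ z, w * ‖f z‖ ^ p' := by
        rw [Finset.mul_sum, Finset.mul_sum, Finset.mul_sum]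
        refine Finset.sum_congr rfl fun z _ => by ring
    _ ≤ (4:ℝ) ^ p * B ^ 2 * A ^ (p - 2) * (1 - r)⁻¹ * 1 := by
        have hc : (0:ℝ) ≤ (4:ℝ) ^ p * B ^ 2 * A ^ (p - 2) * (1 - r)⁻¹ := by
          have : (0:ℝ) < 1 - r := by linarith
          positivity
        exact mul_le_mul_of_nonneg_left hfp hc
    _ = (4:ℝ) ^ p * B ^ 2 * A ^ (p - 2) * (1 - (2:ℝ) ^ (-(p - 2)))⁻¹ := by
        rw [mul_one, hrdef]


section main
variable {F : Type} [Field F] [Fintype F] {d : ℕ}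

private lemma Eop_add (S : Finset (Fin d → F)) (g b : (Fin d → F) → ℂ) :
    Eop S (g + b) = Eop S g + Eop S b := by
  funext x
  simp only [Eop, Pi.add_apply, Finset.sum_add_distrib, Finset.mul_sum]
  simp only [← Finset.mul_sum]
  ring

private lemma conv_le (S : Finset (Fin d → F)) (hS : S.Nonempty) (g : (Fin d → F) → ℂ)
    (x : Fin d → F) :
    ‖(S.card : ℂ)⁻¹ * ∑ y ∈ S, g (x - y)‖ ≤ (S.card : ℝ)⁻¹ * ∑ z, ‖g z‖ := by
  have hs0 : (0:ℝ) < (S.card : ℝ) := by exact_mod_cast hS.card_pos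
  rw [norm_mul, norm_inv]
  have h1 : ‖((S.card : ℕ) : ℂ)‖ = (S.card : ℝ) := by
    simp
  rw [h1]
  refine mul_le_mul_of_nonneg_left ?_ (by positivity)
  refine (norm_sum_le _ _).trans ?_
  have himg : ∑ y ∈ S, ‖g (x - y)‖ = ∑ z ∈ S.image (fun y => x - y), ‖g z‖ := by
    rw [Finset.sum_image]
    intro a _ b _ hab
    simpa using sub_right_injective hab
  rw [himg]
  exact Finset.sum_le_sum_of_subset_of_nonneg (Finset.subset_univ _)
    (fun z _ _ => norm_nonneg _)

private lemma Eop_inf (S : Finset (Fin d → F)) (hS : S.Nonempty) (g : (Fin d → F) → ℂ)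
    (x : Fin d → F) :
    ‖Eop S g x‖ ≤ ((Fintype.card (Fin d → F) : ℝ) / (S.card : ℝ) + 1) *
      ∑ z, (Fintype.card (Fin d → F) : ℝ)⁻¹ * ‖g z‖ := by
  have hs0 : (0:ℝ) < (S.card : ℝ) := by exact_mod_cast hS.card_pos
  have hn0 : (0:ℝ) < (Fintype.card (Fin d → F) : ℝ) := by exact_mod_cast Fintype.card_pos
  have hM : ‖(Fintype.card (Fin d → F) : ℂ)⁻¹ * ∑ z, g z‖
      ≤ (Fintype.card (Fin d → F) : ℝ)⁻¹ * ∑ z, ‖g z‖ := by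
    rw [norm_mul, norm_inv]
    have h1 : ‖((Fintype.card (Fin d → F) : ℕ) : ℂ)‖ = (Fintype.card (Fin d → F) : ℝ) := by simp
    rw [h1]
    exact mul_le_mul_of_nonneg_left (norm_sum_le _ _) (by positivity)
  have hT := conv_le S hS g x
  calc ‖Eop S g x‖ ≤ ‖(S.card : ℂ)⁻¹ * ∑ y ∈ S, g (x - y)‖
        + ‖(Fintype.card (Fin d → F) : ℂ)⁻¹ * ∑ z, g z‖ := norm_sub_le _ _
    _ ≤ (S.card : ℝ)⁻¹ * ∑ z, ‖g z‖
        + (Fintype.card (Fin d → F) : ℝ)⁻¹ * ∑ z, ‖g z‖ := add_le_add hT hM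
    _ = ((Fintype.card (Fin d → F) : ℝ) / (S.card : ℝ) + 1) *
          ∑ z, (Fintype.card (Fin d → F) : ℝ)⁻¹ * ‖g z‖ := by
        rw [← Finset.mul_sum]
        field_simp

private lemma core {F : Type} [Field F] [Fintype F] {d : ℕ} (χ : AddChar F ℂ) (hχ : χ ≠ 1)
    (S : Finset (Fin d → F)) (hS : S.Nonempty) (p B : ℝ) (hp : 2 < p) (hB : 0 < B)
    (hdecay : ∀ m : Fin d → F, m ≠ 0 →
      ‖(S.card : ℂ)⁻¹ * ∑ y ∈ S, χ (∑ j, y j * m j)‖ ≤ B)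
    (f : (Fin d → F) → ℂ) :
    ((Fintype.card (Fin d → F) : ℝ)⁻¹ *
        ∑ x, ‖(S.card : ℂ)⁻¹ * ∑ y ∈ S, f (x - y)‖ ^ p) ^ (1/p)
      ≤ (((4:ℝ) ^ p * B ^ 2 * ((Fintype.card (Fin d → F) : ℝ) / (S.card : ℝ) + 1) ^ (p - 2) *
            (1 - (2:ℝ) ^ (-(p - 2)))⁻¹) ^ (1/p) + 1) *
        ((Fintype.card (Fin d → F) : ℝ)⁻¹ * ∑ x, ‖f x‖ ^ (p / (p - 1))) ^ ((p - 1)/p) := by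
  have hp1 : (1:ℝ) < p := by linarith
  have hp0 : (0:ℝ) < p := by linarith
  have hpm1 : (0:ℝ) < p - 1 := by linarith
  set n : ℝ := (Fintype.card (Fin d → F) : ℝ) with hndef
  have hn0 : 0 < n := by rw [hndef]; exact_mod_cast Fintype.card_pos
  set w : ℝ := n⁻¹ with hwdef
  have hw0 : (0:ℝ) ≤ w := by positivity
  have hnw : n * w = 1 := mul_inv_cancel₀ hn0.ne'
  set A : ℝ := n / (S.card : ℝ) + 1 with hAdef
  have hs0 : (0:ℝ) < (S.card : ℝ) := by exact_mod_cast hS.card_pos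
  have hA : 0 < A := by positivity
  set p' : ℝ := p / (p - 1) with hp'def
  have hp'1 : 1 ≤ p' := by rw [hp'def, le_div_iff₀ hpm1]; linarith
  have hp'0 : 0 < p' := by linarith
  set R : ℝ := (4:ℝ) ^ p * B ^ 2 * A ^ (p - 2) * (1 - (2:ℝ) ^ (-(p - 2)))⁻¹ with hRdef
  -- the three hypotheses of interp
  have Hinf : ∀ g : (Fin d → F) → ℂ, ∀ x, ‖Eop S g x‖ ≤ A * ∑ z, w * ‖g z‖ :=
    fun g x => Eop_inf S hS g x
  have hns : ∀ z : ℂ, ‖z‖ ^ (2:ℝ) = Complex.normSq z := by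
    intro z
    rw [show (2:ℝ) = ((2:ℕ):ℝ) by norm_num, Real.rpow_natCast,
      Complex.sq_norm]
  have H2 : ∀ g : (Fin d → F) → ℂ,
      ∑ x, w * ‖Eop S g x‖ ^ (2:ℝ) ≤ B ^ 2 * ∑ z, w * ‖g z‖ ^ (2:ℝ) := by
    intro g
    have hl2 := l2bound χ hχ S hS B hB.le (fun m hm => hdecay m hm) g
    calc ∑ x, w * ‖Eop S g x‖ ^ (2:ℝ) = w * ∑ x, Complex.normSq (Eop S g x) := by
          rw [Finset.mul_sum]
          exact Finset.sum_congr rfl fun x _ => by rw [hns]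
      _ ≤ w * (B ^ 2 * ∑ z, Complex.normSq (g z)) := mul_le_mul_of_nonneg_left hl2 hw0
      _ = B ^ 2 * ∑ z, w * ‖g z‖ ^ (2:ℝ) := by
          rw [Finset.mul_sum, Finset.mul_sum, Finset.mul_sum]
          refine Finset.sum_congr rfl fun z _ => ?_
          rw [hns]; ring
  -- the full averaging operator and the constant part
  set TF : ((Fin d → F) → ℂ) → (Fin d → F) → ℂ :=
    fun g x => (S.card : ℂ)⁻¹ * ∑ y ∈ S, g (x - y) with hTFdef
  have hTEM : ∀ g : (Fin d → F) → ℂ, ∀ x, ‖TF g x‖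
      ≤ ‖Eop S g x‖ + ‖(n:ℂ)⁻¹ * ∑ z, g z‖ := by
    intro g x
    have : TF g x = Eop S g x + (n:ℂ)⁻¹ * ∑ z, g z := by
      simp only [Eop, hTFdef, hndef]
      push_cast
      ring
    rw [this]
    exact norm_add_le _ _
  have hMle : ∀ g : (Fin d → F) → ℂ, ‖(n:ℂ)⁻¹ * ∑ z, g z‖ ≤ ∑ z, w * ‖g z‖ := by
    intro g
    rw [norm_mul, norm_inv, ← Finset.mul_sum]
    have h1 : ‖(n:ℂ)‖ = n := by
      rw [hndef]; push_cast; simp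
    rw [h1, ← hwdef]
    exact mul_le_mul_of_nonneg_left (norm_sum_le _ _) hw0
  -- case f ≡ 0
  by_cases hNp : ∑ x, ‖f x‖ ^ p' = 0
  · have hf0 : ∀ z, f z = 0 := by
      intro z
      have hz := (Finset.sum_eq_zero_iff_of_nonneg
        (fun x _ => Real.rpow_nonneg (norm_nonneg _) _)).1 hNp z (Finset.mem_univ z)
      have := (Real.rpow_eq_zero (norm_nonneg _) (by positivity : p' ≠ 0)).1 hz
      exact norm_eq_zero.1 this
    have hL : w * ∑ x, ‖(S.card : ℂ)⁻¹ * ∑ y ∈ S, f (x - y)‖ ^ p = 0 := by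
      have hterm : ∀ x : Fin d → F, ‖(S.card : ℂ)⁻¹ * ∑ y ∈ S, f (x - y)‖ ^ p = 0 := by
        intro x
        rw [Finset.sum_congr rfl (fun y _ => hf0 (x - y)), Finset.sum_const_zero, mul_zero,
          norm_zero, Real.zero_rpow hp0.ne']
      rw [Finset.sum_congr rfl (fun x _ => hterm x), Finset.sum_const_zero, mul_zero]
    rw [hL, hNp, mul_zero, Real.zero_rpow (by positivity : 1/p ≠ 0),
      Real.zero_rpow (by positivity : (p - 1)/p ≠ 0), mul_zero]
  · -- main case
    have hSp0 : 0 < ∑ x, ‖f x‖ ^ p' :=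
      lt_of_le_of_ne (Finset.sum_nonneg fun x _ => Real.rpow_nonneg (norm_nonneg _) _)
        (Ne.symm hNp)
    set Sp : ℝ := ∑ x, ‖f x‖ ^ p' with hSpdef
    have hwSp : 0 < w * Sp := by positivity
    set ν : ℝ := (w * Sp) ^ ((p - 1)/p) with hνdef
    have hν : 0 < ν := Real.rpow_pos_of_pos hwSp _
    have hνC : (ν:ℂ) ≠ 0 := by exact_mod_cast hν.ne'
    set f₁ : (Fin d → F) → ℂ := fun z => (ν:ℂ)⁻¹ * f z with hf₁def
    have hf₁norm : ∀ z, ‖f₁ z‖ = ν⁻¹ * ‖f z‖ := by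
      intro z
      rw [hf₁def]
      simp only [norm_mul, norm_inv, Complex.norm_real, Real.norm_eq_abs,
        abs_of_pos hν]
    have hνp' : ν ^ p' = w * Sp := by
      rw [hνdef, ← Real.rpow_mul hwSp.le]
      have he : (p - 1)/p * p' = 1 := by rw [hp'def]; field_simp
      rw [he, Real.rpow_one]
    have hfp1 : ∑ z, w * ‖f₁ z‖ ^ p' = 1 := by
      have hterm : ∀ z, w * ‖f₁ z‖ ^ p' = (ν ^ p')⁻¹ * (w * ‖f z‖ ^ p') := by
        intro z
        rw [hf₁norm z, Real.mul_rpow (by positivity) (norm_nonneg _), Real.inv_rpow hν.le]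
        ring
      rw [Finset.sum_congr rfl fun z _ => hterm z, ← Finset.mul_sum, hνp']
      rw [← Finset.mul_sum, ← hSpdef]
      field_simp
      exact div_self (inv_ne_zero hn0.ne')
    have hf11 : ∑ z, w * ‖f₁ z‖ ≤ 1 := by
      have hJ := Real.inner_le_weight_mul_Lp_of_nonneg Finset.univ hp'1 (fun _ => w)
        (fun z => ‖f₁ z‖) (fun _ => hw0) (fun z => norm_nonneg _)
      have hsw : ∑ _z : Fin d → F, w = 1 := by
        rw [Finset.sum_const, Finset.card_univ, nsmul_eq_mul, ← hndef, hnw]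
      rw [hsw, Real.one_rpow, one_mul] at hJ
      have hfp1' : ∑ z, w * ‖f₁ z‖ ^ p' = 1 := hfp1
      rw [hfp1', Real.one_rpow] at hJ
      exact hJ
    have hinterp := interp (Eop S) (Eop_add S) w p A B hw0 hp hA hB.le Hinf H2 f₁ hf11
      (le_of_eq hfp1)
    -- Minkowski step for the normalized function
    have hMf₁ : ‖(n:ℂ)⁻¹ * ∑ z, f₁ z‖ ≤ 1 := (hMle f₁).trans hf11
    have hwp : ∀ t : ℝ, 0 ≤ t → (w ^ (1/p) * t) ^ p = w * t ^ p := by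
      intro t ht
      rw [Real.mul_rpow (Real.rpow_nonneg hw0 _) ht, ← Real.rpow_mul hw0,
        one_div_mul_cancel hp0.ne', Real.rpow_one]
    have hmink : (∑ x, w * ‖TF f₁ x‖ ^ p) ^ (1/p) ≤ R ^ (1/p) + 1 := by
      set u : (Fin d → F) → ℝ := fun x => w ^ (1/p) * ‖Eop S f₁ x‖ with hudef
      set v : (Fin d → F) → ℝ := fun x => w ^ (1/p) * ‖(n:ℂ)⁻¹ * ∑ z, f₁ z‖ with hvdef
      have hML := Real.Lp_add_le (s := Finset.univ) (f := u) (g := v) (p := p) hp1.le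
      have hstep1 : ∑ x, w * ‖TF f₁ x‖ ^ p ≤ ∑ x, |u x + v x| ^ p := by
        refine Finset.sum_le_sum fun x _ => ?_
        have hw1p : (0:ℝ) ≤ w ^ (1/p) := Real.rpow_nonneg hw0 _
        have huv : 0 ≤ u x + v x := by
          have h1 : 0 ≤ u x := mul_nonneg hw1p (norm_nonneg _)
          have h2 : 0 ≤ v x := mul_nonneg hw1p (norm_nonneg _)
          linarith
        rw [abs_of_nonneg huv]
        have h1 : w * ‖TF f₁ x‖ ^ p = (w ^ (1/p) * ‖TF f₁ x‖) ^ p := (hwp _ (norm_nonneg _)).symm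
        rw [h1]
        refine Real.rpow_le_rpow (by positivity) ?_ hp0.le
        calc w ^ (1/p) * ‖TF f₁ x‖
            ≤ w ^ (1/p) * (‖Eop S f₁ x‖ + ‖(n:ℂ)⁻¹ * ∑ z, f₁ z‖) :=
              mul_le_mul_of_nonneg_left (hTEM f₁ x) hw1p
          _ = u x + v x := by rw [hudef, hvdef]; ring
      have hstep2 : (∑ x, |u x| ^ p) ^ (1/p) ≤ R ^ (1/p) := by
        refine Real.rpow_le_rpow (Finset.sum_nonneg fun x _ => by positivity) ?_ (by positivity)
        have heq : ∑ x, |u x| ^ p = ∑ x, w * ‖Eop S f₁ x‖ ^ p := by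
          refine Finset.sum_congr rfl fun x _ => ?_
          rw [hudef, abs_of_nonneg (by positivity), hwp _ (norm_nonneg _)]
        rw [heq]
        exact hinterp
      have hstep3 : (∑ x, |v x| ^ p) ^ (1/p) ≤ 1 := by
        have hvx : ∀ x : Fin d → F, |v x| ^ p = w * ‖(n:ℂ)⁻¹ * ∑ z, f₁ z‖ ^ p := by
          intro x
          rw [hvdef, abs_of_nonneg (by positivity), hwp _ (norm_nonneg _)]
        rw [Finset.sum_congr rfl fun x _ => hvx x, Finset.sum_const, Finset.card_univ,
          nsmul_eq_mul, ← hndef, ← mul_assoc, hnw, one_mul, ← Real.rpow_mul (norm_nonneg _),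
          mul_one_div, div_self hp0.ne', Real.rpow_one]
        exact hMf₁
      calc (∑ x, w * ‖TF f₁ x‖ ^ p) ^ (1/p) ≤ (∑ x, |u x + v x| ^ p) ^ (1/p) :=
            Real.rpow_le_rpow (Finset.sum_nonneg fun x _ => by positivity) hstep1 (by positivity)
        _ ≤ (∑ x, |u x| ^ p) ^ (1/p) + (∑ x, |v x| ^ p) ^ (1/p) := hML
        _ ≤ R ^ (1/p) + 1 := add_le_add hstep2 hstep3
    -- unscale
    have hTFscale : ∀ x, TF f x = (ν:ℂ) * TF f₁ x := by
      intro x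
      simp only [hTFdef, hf₁def, Finset.mul_sum]
      refine Finset.sum_congr rfl fun y _ => ?_
      rw [show ((ν:ℂ)) * (((S.card:ℂ))⁻¹ * (((ν:ℂ))⁻¹ * f (x - y)))
          = ((ν:ℂ) * ((ν:ℂ))⁻¹) * (((S.card:ℂ))⁻¹ * f (x - y)) from by ring,
        mul_inv_cancel₀ hνC, one_mul]
    have hLHS : (w * ∑ x, ‖TF f x‖ ^ p) ^ (1/p) = ν * (∑ x, w * ‖TF f₁ x‖ ^ p) ^ (1/p) := by
      have hterm : ∀ x : Fin d → F, ‖TF f x‖ ^ p = ν ^ p * ‖TF f₁ x‖ ^ p := by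
        intro x
        rw [hTFscale x, norm_mul]
        have hν' : ‖(ν:ℂ)‖ = ν := by
          simp [Complex.norm_real, abs_of_pos hν]
        rw [hν', Real.mul_rpow hν.le (norm_nonneg _)]
      rw [Finset.sum_congr rfl fun x _ => hterm x]
      have hpull : w * ∑ x, ν ^ p * ‖TF f₁ x‖ ^ p = ν ^ p * ∑ x, w * ‖TF f₁ x‖ ^ p := by
        simp only [Finset.mul_sum]
        exact Finset.sum_congr rfl fun x _ => by ring
      rw [hpull, Real.mul_rpow (by positivity) (Finset.sum_nonneg fun x _ => by positivity),
        ← Real.rpow_mul hν.le, mul_one_div, div_self hp0.ne', Real.rpow_one]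
    have hgoalL : (w * ∑ x, ‖TF f x‖ ^ p) ^ (1/p) ≤ (R ^ (1/p) + 1) * ν := by
      rw [hLHS, mul_comm (R ^ (1/p) + 1) ν]
      exact mul_le_mul_of_nonneg_left hmink hν.le
    exact hgoalL
end main

set_option maxHeartbeats 1000000 in
/-- averaging bound from Fourier decay. If `|S| ≥ c q^{d−1}` and
`|(dσ)^∨(m)| ≤ C q^{−α/2}` for all `m ≠ 0`, then
`‖f ∗ dσ‖_{L^{α+2}(dx)} ≤ C' ‖f‖_{L^{(α+2)/(α+1)}(dx)}` with `C'` independent of `q`. -/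
theorem statement15 (d : ℕ) (hd : 1 ≤ d) (α c C : ℝ) (hα : 0 < α) (hc : 0 < c) (hC : 0 < C) :
    ∃ C' : ℝ, 0 < C' ∧
      ∀ (F : Type) [Field F] [Fintype F] (χ : AddChar F ℂ), χ ≠ 1 →
        ∀ S : Finset (Fin d → F), S.Nonempty →
          c * (Fintype.card F : ℝ) ^ (d - 1) ≤ (S.card : ℝ) →
          (∀ m : Fin d → F, m ≠ 0 →
            ‖(S.card : ℂ)⁻¹ * ∑ x ∈ S, χ (∑ j, x j * m j)‖ ≤
              C * (Fintype.card F : ℝ) ^ (-(α / 2))) →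
          ∀ f : (Fin d → F) → ℂ,
            (((Fintype.card F : ℝ) ^ d)⁻¹ *
                ∑ x : Fin d → F, ‖(S.card : ℂ)⁻¹ * ∑ y ∈ S, f (x - y)‖ ^ (α + 2)) ^
                ((1 : ℝ) / (α + 2)) ≤
              C' * (((Fintype.card F : ℝ) ^ d)⁻¹ *
                  ∑ x : Fin d → F, ‖f x‖ ^ ((α + 2) / (α + 1))) ^ ((α + 1) / (α + 2)) := by
  have h2α1 : (2:ℝ) ^ (-α) < 1 :=
    Real.rpow_lt_one_of_one_lt_of_neg one_lt_two (by linarith)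
  have h2α0 : (0:ℝ) < (2:ℝ) ^ (-α) := Real.rpow_pos_of_pos two_pos _
  set c₂ : ℝ := (1 - (2:ℝ) ^ (-α))⁻¹ with hc₂def
  have hc₂0 : 0 < c₂ := by rw [hc₂def]; exact inv_pos.2 (by linarith)
  have hc₂1 : 1 ≤ c₂ := by
    rw [hc₂def]
    exact (one_le_inv₀ (by linarith)).2 (by linarith)
  refine ⟨1 + 4 * (1 + 1/c) * (1 + C) * c₂, by positivity, ?_⟩
  intro F _ _ χ hχ S hS hScard hFour f
  set q : ℝ := (Fintype.card F : ℝ) with hqdef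
  have hq1 : (1:ℝ) ≤ q := by
    rw [hqdef]; exact_mod_cast Nat.one_le_iff_ne_zero.2 Fintype.card_ne_zero
  have hq0 : (0:ℝ) < q := by linarith
  have hcardX : (Fintype.card (Fin d → F) : ℝ) = q ^ d := by
    have h1 : Fintype.card (Fin d → F) = Fintype.card F ^ d := by
      rw [Fintype.card_fun, Fintype.card_fin]
    rw [h1, hqdef]
    push_cast
    ring
  set p : ℝ := α + 2 with hpdef
  have hp : 2 < p := by rw [hpdef]; linarith
  have hp0 : (0:ℝ) < p := by linarith
  set B : ℝ := C * q ^ (-(α/2)) with hBdef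
  have hB : 0 < B := by
    have := Real.rpow_pos_of_pos hq0 (-(α/2))
    rw [hBdef]; positivity
  have hcore := core χ hχ S hS p B hp hB hFour f
  rw [show p - 1 = α + 1 from by rw [hpdef]; ring,
    show p - 2 = α from by rw [hpdef]; ring] at hcore
  rw [← hcardX]
  have hs0 : (0:ℝ) < (S.card : ℝ) := by exact_mod_cast hS.card_pos
  set A : ℝ := (Fintype.card (Fin d → F) : ℝ) / (S.card : ℝ) + 1 with hAdef
  have hA0 : 0 < A := by positivity
  -- bound on A
  have hAq : A ≤ q * (1 + 1/c) := by
    have hqd1 : (0:ℝ) < q ^ (d - 1) := by positivity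
    have hSlow : (0:ℝ) < c * q ^ (d - 1) := by positivity
    have hqd : q ^ d = q ^ (d - 1) * q := by
      conv_lhs => rw [show d = (d - 1) + 1 by omega]
      rw [pow_succ]
    have h1 : (Fintype.card (Fin d → F) : ℝ) / (S.card : ℝ) ≤ q / c := by
      rw [hcardX]
      calc q ^ d / (S.card : ℝ) ≤ q ^ d / (c * q ^ (d - 1)) :=
            div_le_div_of_nonneg_left (by positivity) hSlow hScard
        _ = q / c := by
            rw [hqd]
            field_simp
    have h2 : q / c + 1 ≤ q * (1 + 1/c) := by
      have : q * (1 + 1/c) = q + q / c := by field_simp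
      rw [this]
      linarith
    calc A = (Fintype.card (Fin d → F) : ℝ) / (S.card : ℝ) + 1 := hAdef
      _ ≤ q / c + 1 := by linarith
      _ ≤ q * (1 + 1/c) := h2
  -- bound the constant in hcore
  set R : ℝ := (4:ℝ) ^ p * B ^ 2 * A ^ α * c₂ with hRdef
  have hRsplit : R ^ (1/p) = ((4:ℝ) ^ p) ^ (1/p) * (B ^ 2) ^ (1/p) * (A ^ α) ^ (1/p)
      * c₂ ^ (1/p) := by
    rw [hRdef, Real.mul_rpow (by positivity) hc₂0.le,
      Real.mul_rpow (by positivity) (by positivity),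
      Real.mul_rpow (by positivity) (by positivity)]
  have h4 : ((4:ℝ) ^ p) ^ (1/p) = 4 := by
    rw [← Real.rpow_mul (by norm_num : (0:ℝ) ≤ 4), mul_one_div, div_self hp0.ne',
      Real.rpow_one]
  have hBf : (B ^ 2) ^ (1/p) = C ^ (2/p) * q ^ (-(α/p)) := by
    rw [show B ^ 2 = B ^ ((2:ℕ):ℝ) from (Real.rpow_natCast B 2).symm,
      ← Real.rpow_mul hB.le, hBdef,
      Real.mul_rpow hC.le (Real.rpow_nonneg hq0.le _),
      ← Real.rpow_mul hq0.le]
    push_cast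
    rw [show (2:ℝ) * (1/p) = 2/p from by ring]
    congr 1
    ring
  have hAf : (A ^ α) ^ (1/p) = A ^ (α/p) := by
    rw [← Real.rpow_mul hA0.le, mul_one_div]
  have hAqbound : A ^ (α/p) * q ^ (-(α/p)) ≤ 1 + 1/c := by
    have h1 : A ^ (α/p) * q ^ (-(α/p)) = (A * q⁻¹) ^ (α/p) := by
      rw [Real.mul_rpow hA0.le (by positivity), Real.rpow_neg hq0.le,
        ← Real.inv_rpow hq0.le]
    have h2 : A * q⁻¹ ≤ 1 + 1/c := by
      rw [← div_eq_mul_inv, div_le_iff₀ hq0]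
      calc A ≤ q * (1 + 1/c) := hAq
        _ = (1 + 1/c) * q := by ring
    have h3 : (0:ℝ) ≤ α/p := by positivity
    have h4' : α/p ≤ 1 := by
      rw [div_le_one hp0, hpdef]; linarith
    calc A ^ (α/p) * q ^ (-(α/p)) = (A * q⁻¹) ^ (α/p) := h1
      _ ≤ (1 + 1/c) ^ (α/p) := Real.rpow_le_rpow (by positivity) h2 h3
      _ ≤ (1 + 1/c) ^ (1:ℝ) :=
          Real.rpow_le_rpow_of_exponent_le (by nlinarith [one_div_pos.2 hc]) h4'
      _ = 1 + 1/c := Real.rpow_one _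
  have hCbound : C ^ (2/p) ≤ 1 + C := by
    rcases le_total C 1 with h | h
    · calc C ^ (2/p) ≤ 1 := Real.rpow_le_one hC.le h (by positivity)
        _ ≤ 1 + C := by linarith
    · calc C ^ (2/p) ≤ C ^ (1:ℝ) :=
            Real.rpow_le_rpow_of_exponent_le h (by rw [div_le_one hp0]; linarith)
        _ = C := Real.rpow_one _
        _ ≤ 1 + C := by linarith
  have hc₂bound : c₂ ^ (1/p) ≤ c₂ := by
    calc c₂ ^ (1/p) ≤ c₂ ^ (1:ℝ) :=
          Real.rpow_le_rpow_of_exponent_le hc₂1 (by rw [div_le_one hp0]; linarith)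
      _ = c₂ := Real.rpow_one _
  have hRle : R ^ (1/p) ≤ 4 * (1 + 1/c) * (1 + C) * c₂ := by
    rw [hRsplit, h4, hBf, hAf]
    calc 4 * (C ^ (2/p) * q ^ (-(α/p))) * A ^ (α/p) * c₂ ^ (1/p)
        = 4 * C ^ (2/p) * (A ^ (α/p) * q ^ (-(α/p))) * c₂ ^ (1/p) := by ring
      _ ≤ 4 * (1 + C) * (1 + 1/c) * c₂ := by
          have hq' : (0:ℝ) ≤ q ^ (-(α/p)) := Real.rpow_nonneg hq0.le _
          have hA' : (0:ℝ) ≤ A ^ (α/p) := Real.rpow_nonneg hA0.le _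
          have hC' : (0:ℝ) ≤ C ^ (2/p) := Real.rpow_nonneg hC.le _
          have hc₂' : (0:ℝ) ≤ c₂ ^ (1/p) := Real.rpow_nonneg hc₂0.le _
          have m1 : 4 * C ^ (2/p) * (A ^ (α/p) * q ^ (-(α/p))) * c₂ ^ (1/p)
              ≤ 4 * C ^ (2/p) * (1 + 1/c) * c₂ ^ (1/p) := by
            have := mul_le_mul_of_nonneg_left hAqbound (by positivity : (0:ℝ) ≤ 4 * C ^ (2/p))
            exact mul_le_mul_of_nonneg_right (by
              calc 4 * C ^ (2/p) * (A ^ (α/p) * q ^ (-(α/p)))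
                  ≤ 4 * C ^ (2/p) * (1 + 1/c) := this) hc₂'
          have m2 : 4 * C ^ (2/p) * (1 + 1/c) * c₂ ^ (1/p)
              ≤ 4 * (1 + C) * (1 + 1/c) * c₂ ^ (1/p) := by
            refine mul_le_mul_of_nonneg_right ?_ hc₂'
            refine mul_le_mul_of_nonneg_right ?_ (by positivity)
            exact mul_le_mul_of_nonneg_left hCbound (by norm_num)
          have m3 : 4 * (1 + C) * (1 + 1/c) * c₂ ^ (1/p)
              ≤ 4 * (1 + C) * (1 + 1/c) * c₂ := by
            refine mul_le_mul_of_nonneg_left hc₂bound (by positivity)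
          linarith
      _ = 4 * (1 + 1/c) * (1 + C) * c₂ := by ring
  refine hcore.trans ?_
  have hK0 : (0:ℝ) ≤ ((Fintype.card (Fin d → F) : ℝ))⁻¹ *
      ∑ x : Fin d → F, ‖f x‖ ^ ((α + 2) / (α + 1)) := by
    have : (0:ℝ) ≤ ∑ x : Fin d → F, ‖f x‖ ^ ((α + 2) / (α + 1)) :=
      Finset.sum_nonneg fun x _ => Real.rpow_nonneg (norm_nonneg _) _
    positivity
  refine mul_le_mul_of_nonneg_right ?_ (Real.rpow_nonneg hK0 _)
  linarith [hRle]
end
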